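/- Let X = GC(G, S, α) be a generalized Cayley graph and let K = {g ∈ G : α(g)·S = S}. Then two vertices x, y ∈ G have exactly the same set of neighbours in X (i.e., for every z ∈ G, z is adjacent to x if and only if z is adjacent to y) if and only if x⁻¹·y ∈ K. -/

import Mathlib

/-- The generalized Cayley graph `GC(G, S, α)`. -/
def GC {G : Type*} [Group G] (α : G ≃* G) (S : Set G)
    (h1 : ∀ x : G, α (α x) = x)
    (h2 : ∀ x : G, α x⁻¹ * x ∉ S)
    (h3 : ⇑α '' S⁻¹ = S) : SimpleGraph G where
  Adj x y := α x⁻¹ * y ∈ S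
  symm := ⟨by
    intro x y hxy
    have hmem : (α x⁻¹ * y)⁻¹ ∈ S⁻¹ := by simpa [Set.mem_inv] using hxy
    have himg : α ((α x⁻¹ * y)⁻¹) ∈ ⇑α '' S⁻¹ := Set.mem_image_of_mem _ hmem
    rw [h3] at himg
    simpa [mul_inv_rev, map_mul, map_inv, h1] using himg⟩
  loopless := ⟨fun x hx => h2 x hx⟩


/-- In a generalized Cayley graph `X = GC(G, S, α)`, two vertices `x, y`
have exactly the same set of neighbours if and only if `x⁻¹·y` lies in
`K = {g ∈ G : α(g)·S = S}`. -/
theorem stmt_16 {G : Type*} [Group G] (α : G ≃* G) (S : Set G)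
    (h1 : ∀ x : G, α (α x) = x)
    (h2 : ∀ x : G, α x⁻¹ * x ∉ S)
    (h3 : ⇑α '' S⁻¹ = S)
    (x y : G) :
    (∀ z : G, (GC α S h1 h2 h3).Adj x z ↔ (GC α S h1 h2 h3).Adj y z) ↔
      x⁻¹ * y ∈ {g : G | (fun s => α g * s) '' S = S} := by

  simp only [Set.mem_setOf_eq]
  show (∀ z, α x⁻¹ * z ∈ S ↔ α y⁻¹ * z ∈ S) ↔ _
  constructor
  · intro h
    ext t
    constructor
    · rintro ⟨s, hs, rfl⟩
      have h1' : α y⁻¹ * (α y * s) ∈ S := by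
        simpa [map_inv, mul_assoc] using hs
      have := (h (α y * s)).mpr h1'
      simpa [map_mul, map_inv, mul_assoc] using this
    · intro ht
      refine ⟨α (y⁻¹ * x) * t, ?_, ?_⟩
      · have h1' : α x⁻¹ * (α x * t) ∈ S := by
          simpa [map_inv, mul_assoc] using ht
        have := (h (α x * t)).mp h1'
        simpa [map_mul, map_inv, mul_assoc] using this
      · simp [map_mul, map_inv, mul_assoc]
  · intro hK z
    constructor
    · intro hxz
      rw [← hK] at hxz
      obtain ⟨s, hs, he⟩ := hxz
      have : s = α y⁻¹ * z := by
        have h' : α (x⁻¹ * y) * (α y⁻¹ * z) = α x⁻¹ * z := by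
          simp [map_mul, map_inv, mul_assoc]
        simp only at he
        exact mul_left_cancel (he.trans h'.symm)
      rwa [this] at hs
    · intro hyz
      rw [← hK]
      exact ⟨α y⁻¹ * z, hyz, by simp [map_mul, map_inv, mul_assoc]⟩
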